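/- Let ℳ = (Δ, (I_k)_{k∈ℕ}) be a temporal interpretation that is stabilized from instant N onward, i.e. A^{I_k} = A^{I_N} for every concept name A and S^{I_k} = S^{I_N} for every role name S, for all k ≥ N. Then for every temporal concept D and every instant i ∈ ℕ, the infinitary temporal semantics reduces to a bounded one: (◇_F D)^{I_i} = ⋃_{i < k ≤ max(i+1,N)} D^{I_k} and (□_F D)^{I_i} = ⋂_{i < k ≤ max(i+1,N)} D^{I_k}. -/
import Mathlib


/-- TDL-Lite roles: a role name `S ∈ N_R` (coded by a natural number) or its inverse `S⁻`. -/
inductive TRole : Type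
  | name (S : ℕ)
  | inv  (S : ℕ)
deriving DecidableEq

/-- TDL-Lite temporal concepts: `⊥ | ⊤ | A | ∃R | ¬D | D₁ ⊓ D₂ | ◇_F D | □_F D`. -/
inductive TConcept : Type
  | bot
  | top
  | atom (A : ℕ)
  | ex (R : TRole)
  | neg (C : TConcept)
  | inter (C D : TConcept)
  | dia (C : TConcept)
  | box (C : TConcept)
deriving DecidableEq

/-- A temporal interpretation: a fixed nonempty domain `Δ` together with, for each
instant `n`, an extension for every concept name and every role name. -/
structure TInterp (Δ : Type) : Type where
  nonempty : Nonempty Δ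
  conc : ℕ → ℕ → Set Δ
  role : ℕ → ℕ → Set (Δ × Δ)

variable {Δ : Type}

/-- Semantics of roles at an instant. -/
def TInterp.rsem (M : TInterp Δ) (n : ℕ) : TRole → Set (Δ × Δ)
  | .name S => M.role n S
  | .inv S  => {p | (p.2, p.1) ∈ M.role n S}

/-- Semantics of temporal concepts at an instant; `◇_F` and `□_F` quantify over the
strict future. -/
def TInterp.csem (M : TInterp Δ) : TConcept → ℕ → Set Δ
  | .bot, _ => ∅
  | .top, _ => Set.univ
  | .atom A, n => M.conc n A
  | .ex R, n => {d | ∃ d', (d, d') ∈ M.rsem n R}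
  | .neg C, n => (M.csem C n)ᶜ
  | .inter C D, n => M.csem C n ∩ M.csem D n
  | .dia C, n => {d | ∃ k, n < k ∧ d ∈ M.csem C k}
  | .box C, n => {d | ∀ k, n < k → d ∈ M.csem C k}

/-- `M` is stabilized from instant `N` onward: the extension of every concept name and of
every role name at any instant `k ≥ N` coincides with its extension at `N`. -/
def Stabilized (M : TInterp Δ) (N : ℕ) : Prop :=
  ∀ k : ℕ, N ≤ k → (∀ A : ℕ, M.conc k A = M.conc N A) ∧ (∀ S : ℕ, M.role k S = M.role N S)


theorem csem_stable (M : TInterp Δ) (N : ℕ) (hstab : Stabilized M N) :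
    ∀ (D : TConcept) (k : ℕ), N ≤ k → M.csem D k = M.csem D N := by
  intro D
  induction D with
  | bot => intro k hk; rfl
  | top => intro k hk; rfl
  | atom A => intro k hk; exact (hstab k hk).1 A
  | ex R =>
    intro k hk
    cases R with
    | name S => simp [TInterp.csem, TInterp.rsem, (hstab k hk).2 S]
    | inv S => simp [TInterp.csem, TInterp.rsem, (hstab k hk).2 S]
  | neg C ih => intro k hk; simp [TInterp.csem, ih k hk]
  | inter C D ihC ihD => intro k hk; simp [TInterp.csem, ihC k hk, ihD k hk]
  | dia C ih =>
    intro k hk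
    ext d
    simp only [TInterp.csem, Set.mem_setOf_eq]
    constructor
    · rintro ⟨j, hj, hd⟩
      exact ⟨N + 1, Nat.lt_succ_self N, by
        rw [ih (N+1) (Nat.le_succ N)]
        rw [ih j (le_trans hk hj.le)] at hd
        exact hd⟩
    · rintro ⟨j, hj, hd⟩
      exact ⟨k + 1, Nat.lt_succ_self k, by
        rw [ih (k+1) (le_trans hk (Nat.le_succ k))]
        rw [ih j (le_of_lt hj)] at hd
        exact hd⟩
  | box C ih =>
    intro k hk
    ext d
    simp only [TInterp.csem, Set.mem_setOf_eq]
    constructor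
    · intro h j hj
      rw [ih j hj.le]
      rw [← ih (k+1) (le_trans hk (Nat.le_succ k))]
      exact h (k+1) (Nat.lt_succ_self k)
    · intro h j hj
      rw [ih j (le_trans hk hj.le)]
      rw [← ih (N+1) (Nat.le_succ N)]
      exact h (N+1) (Nat.lt_succ_self N)

/-- If a temporal interpretation is stabilized from instant `N` onward,
the infinitary semantics of `◇_F` and `□_F` reduces to a bounded one: for every temporal
concept `D` and instant `i`,
`(◇_F D)^{I_i} = ⋃_{i < k ≤ max (i+1) N} D^{I_k}` and
`(□_F D)^{I_i} = ⋂_{i < k ≤ max (i+1) N} D^{I_k}`. -/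
theorem temporal_semantics_bounded (M : TInterp Δ) (N : ℕ) (hstab : Stabilized M N) :
    ∀ (D : TConcept) (i : ℕ),
      (M.csem (TConcept.dia D) i = ⋃ k ∈ Finset.Ioc i (max (i + 1) N), M.csem D k) ∧
      (M.csem (TConcept.box D) i = ⋂ k ∈ Finset.Ioc i (max (i + 1) N), M.csem D k) := by
  intro D i
  set m := max (i + 1) N with hm
  have hiN : N ≤ m := le_max_right _ _
  have him : i < m := lt_of_lt_of_le (Nat.lt_succ_self i) (le_max_left _ _)
  constructor
  · ext d
    simp only [TInterp.csem, Set.mem_setOf_eq, Set.mem_iUnion, Finset.mem_Ioc]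
    constructor
    · rintro ⟨k, hk, hd⟩
      by_cases hkm : k ≤ m
      · exact ⟨k, ⟨hk, hkm⟩, hd⟩
      · refine ⟨m, ⟨him, le_refl m⟩, ?_⟩
        rw [csem_stable M N hstab D m hiN,
          ← csem_stable M N hstab D k (le_trans hiN (le_of_not_ge hkm))]
        exact hd
    · rintro ⟨k, ⟨hk, _⟩, hd⟩
      exact ⟨k, hk, hd⟩
  · ext d
    simp only [TInterp.csem, Set.mem_setOf_eq, Set.mem_iInter, Finset.mem_Ioc]
    constructor
    · intro h k hk; exact h k hk.1
    · intro h k hk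
      by_cases hkm : k ≤ m
      · exact h k ⟨hk, hkm⟩
      · rw [csem_stable M N hstab D k (le_trans hiN (le_of_not_ge hkm)),
          ← csem_stable M N hstab D m hiN]
        exact h m ⟨him, le_refl m⟩
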